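/- Let (X, μ) and (Y, ν) be σ-finite measure spaces, let q < 0, and let F : X × Y → [0, ∞] be a measurable function. Then the reverse integral Minkowski inequality holds: (∫_X (∫_Y F(x,y) dν(y))^q dμ(x))^{1/q} ≥ ∫_Y (∫_X F(x,y)^q dμ(x))^{1/q} dν(y), where negative powers of 0 and ∞ are interpreted by the conventions 0^q = +∞ and (+∞)^q = 0 for q < 0 (as in extended-nonnegative-real rpow). -/

import Mathlib

open MeasureTheory ENNReal

/-- `rpow` with a nonpositive exponent is antitone on `ℝ≥0∞`, with the conventions
`0 ^ q = ∞`, `∞ ^ q = 0` for `q < 0`. -/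
lemma rpow_le_rpow_of_nonpos'' {x y : ℝ≥0∞} {z : ℝ} (hz : z ≤ 0) (h : x ≤ y) :
    y ^ z ≤ x ^ z := by
  rw [← neg_neg z, ENNReal.rpow_neg y, ENNReal.rpow_neg x]
  exact ENNReal.inv_le_inv.mpr (ENNReal.rpow_le_rpow h (by linarith))

/-- Reverse Hölder inequality in `ℝ≥0∞` for a negative exponent `q < 0` and its
"conjugate" `q/(q-1) ∈ (0,1)`. -/
lemma rev_holder {α : Type*} [MeasurableSpace α] (μ : Measure α) {q : ℝ} (hq : q < 0)
    (f g : α → ℝ≥0∞) (hf : Measurable f) (hg : Measurable g) :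
    (∫⁻ a, f a ^ q ∂μ) ^ (1 / q) * (∫⁻ a, g a ^ (q / (q - 1)) ∂μ) ^ ((q - 1) / q) ≤
      ∫⁻ a, f a * g a ∂μ := by
  have hq0 : q ≠ 0 := hq.ne
  have hq1 : q - 1 < 0 := by linarith
  have hq1' : q - 1 ≠ 0 := hq1.ne
  have hr_pos : 0 < q / (q - 1) := div_pos_iff.mpr (Or.inr ⟨hq, hq1⟩)
  have hrq_pos : 0 < (q - 1) / q := div_pos_iff.mpr (Or.inr ⟨hq1, hq⟩)
  set A := ∫⁻ a, f a ^ q ∂μ with hA_def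
  rcases eq_top_or_lt_top A with hA | hAtop
  · rw [hA, ENNReal.top_rpow_of_neg (one_div_neg.mpr hq), zero_mul]
    exact zero_le
  rcases eq_or_ne A 0 with hA0 | hA0
  · have hfae : ∀ᵐ a ∂μ, f a = ∞ := by
      have h0 := (lintegral_eq_zero_iff (hf.pow_const q)).mp hA0
      filter_upwards [h0] with a ha
      rcases ENNReal.rpow_eq_zero_iff.mp ha with ⟨_, h2⟩ | ⟨h1, _⟩
      · linarith
      · exact h1
    rcases eq_or_ne (∫⁻ a, g a ^ (q / (q - 1)) ∂μ) 0 with hg0 | hg0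
    · rw [hg0, ENNReal.zero_rpow_of_pos hrq_pos, mul_zero]
      exact zero_le
    · have hgne : ¬ (g =ᵐ[μ] 0) := by
        intro h
        exact hg0 ((lintegral_eq_zero_iff (hg.pow_const _)).mpr
          (h.mono fun a ha => by
            simp only [Pi.zero_apply] at ha ⊢
            rw [ha, ENNReal.zero_rpow_of_pos hr_pos]))
      have hgint : ∫⁻ a, g a ∂μ ≠ 0 := fun h => hgne ((lintegral_eq_zero_iff hg).mp h)
      have htop : ∫⁻ a, f a * g a ∂μ = ∞ := by
        calc ∫⁻ a, f a * g a ∂μ = ∫⁻ a, ∞ * g a ∂μ :=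
              lintegral_congr_ae (hfae.mono fun a ha => by simp only [ha])
          _ = ∞ * ∫⁻ a, g a ∂μ := lintegral_const_mul _ hg
          _ = ∞ := ENNReal.top_mul hgint
      rw [htop]; exact le_top
  -- main case : 0 < A < ∞
  rcases eq_top_or_lt_top (∫⁻ a, f a * g a ∂μ) with htop | hfg
  · rw [htop]; exact le_top
  have hAT : A ≠ ⊤ := hAtop.ne
  have hfpos : ∀ᵐ a ∂μ, f a ≠ 0 := by
    have h1 : ∀ᵐ a ∂μ, f a ^ q < ∞ := ae_lt_top (hf.pow_const q) hAT
    filter_upwards [h1] with a ha h0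
    rw [h0, ENNReal.zero_rpow_of_neg hq] at ha
    exact (lt_irrefl _ ha)
  have hmul : ∀ᵐ a ∂μ, f a * g a ≠ ∞ := (ae_lt_top (hf.mul hg) hfg.ne).mono fun a h => h.ne
  have hpt : ∀ᵐ a ∂μ, g a ^ (q / (q - 1)) ≤
      (f a * g a) ^ (q / (q - 1)) * f a ^ (-(q / (q - 1))) := by
    filter_upwards [hfpos, hmul] with a ha0 hat
    rcases eq_or_ne (g a) 0 with hga | hga
    · rw [hga, ENNReal.zero_rpow_of_pos hr_pos]; exact zero_le
    · have haT : f a ≠ ∞ := by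
        intro h
        exact hat (by rw [h]; exact ENNReal.top_mul hga)
      have h1 : f a ^ (q / (q - 1)) ≠ 0 := by
        simp [ENNReal.rpow_eq_zero_iff, ha0, haT, not_lt.mpr hr_pos.le]
      have h2 : f a ^ (q / (q - 1)) ≠ ∞ := by
        simp [ENNReal.rpow_eq_top_iff, ha0, haT, not_lt.mpr hr_pos.le]
      rw [ENNReal.mul_rpow_of_nonneg _ _ hr_pos.le, ENNReal.rpow_neg, mul_comm (f a ^ (q / (q - 1))),
        mul_assoc, ENNReal.mul_inv_cancel h1 h2, mul_one]
  have h1q' : (1 : ℝ) - q ≠ 0 := by linarith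
  have hconj : ((q - 1) / q).HolderConjugate (1 - q) := by
    rw [Real.holderConjugate_iff]; constructor
    · rw [sub_div, div_self hq0]
      have : 1 / q < 0 := one_div_neg.mpr hq
      linarith
    · rw [inv_div, inv_eq_one_div, div_add_div _ _ hq1' h1q',
        div_eq_one_iff_eq (mul_ne_zero hq1' h1q')]
      ring
  have holder := ENNReal.lintegral_mul_le_Lp_mul_Lq μ hconj
    (f := fun a => (f a * g a) ^ (q / (q - 1))) (g := fun a => f a ^ (-(q / (q - 1))))
    ((hf.mul hg).pow_const _).aemeasurable (hf.pow_const _).aemeasurable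
  have e1 : ∀ a : α, (((f a * g a) ^ (q / (q - 1))) ^ ((q - 1) / q)) = f a * g a := by
    intro a
    rw [← ENNReal.rpow_mul, show q / (q - 1) * ((q - 1) / q) = 1 by field_simp, ENNReal.rpow_one]
  have e2 : ∀ a : α, ((f a ^ (-(q / (q - 1)))) ^ (1 - q)) = f a ^ q := by
    intro a
    rw [← ENNReal.rpow_mul,
      show -(q / (q - 1)) * (1 - q) = q / (q - 1) * (q - 1) by ring,
      div_mul_cancel₀ q hq1']
  simp only [Pi.mul_apply, e1, e2] at holder
  have key : ∫⁻ a, g a ^ (q / (q - 1)) ∂μ ≤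
      (∫⁻ a, f a * g a ∂μ) ^ (1 / ((q - 1) / q)) * A ^ (1 / (1 - q)) :=
    le_trans (lintegral_mono_ae hpt) holder
  have step := ENNReal.rpow_le_rpow key hrq_pos.le
  rw [ENNReal.mul_rpow_of_nonneg _ _ hrq_pos.le, ← ENNReal.rpow_mul, ← ENNReal.rpow_mul,
    show 1 / ((q - 1) / q) * ((q - 1) / q) = 1 by field_simp,
    show 1 / (1 - q) * ((q - 1) / q) = -(1 / q) by field_simp; ring,
    ENNReal.rpow_one] at step
  calc A ^ (1 / q) * (∫⁻ a, g a ^ (q / (q - 1)) ∂μ) ^ ((q - 1) / q)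
      ≤ A ^ (1 / q) * ((∫⁻ a, f a * g a ∂μ) * A ^ (-(1 / q))) := mul_le_mul_right step _
    _ = (∫⁻ a, f a * g a ∂μ) * (A ^ (1 / q) * A ^ (-(1 / q))) := by ring
    _ = ∫⁻ a, f a * g a ∂μ := by
        rw [← ENNReal.rpow_add _ _ hA0 hAT, add_neg_cancel, ENNReal.rpow_zero, mul_one]

/-- Reverse integral Minkowski inequality for a negative exponent `q < 0`,
with integrals of `[0,∞]`-valued functions and `ENNReal.rpow` conventions
`0 ^ q = ∞`, `∞ ^ q = 0`. -/
theorem reverse_integral_minkowski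
    {X Y : Type*} [MeasurableSpace X] [MeasurableSpace Y]
    (μ : Measure X) (ν : Measure Y) [SigmaFinite μ] [SigmaFinite ν]
    (q : ℝ) (hq : q < 0)
    (F : X × Y → ℝ≥0∞) (hF : Measurable F) :
    (∫⁻ x, (∫⁻ y, F (x, y) ∂ν) ^ q ∂μ) ^ (1 / q) ≥
      ∫⁻ y, (∫⁻ x, F (x, y) ^ q ∂μ) ^ (1 / q) ∂ν := by
  have hq0 : q ≠ 0 := hq.ne
  have hq1 : q - 1 < 0 := by linarith
  have hq1' : q - 1 ≠ 0 := hq1.ne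
  have h1q : 1 / q < 0 := one_div_neg.mpr hq
  have hr_pos : 0 < q / (q - 1) := div_pos_iff.mpr (Or.inr ⟨hq, hq1⟩)
  set G : X → ℝ≥0∞ := fun x => ∫⁻ y, F (x, y) ∂ν with hG_def
  have hG : Measurable G := hF.lintegral_prod_right'
  have hGq : Measurable fun x => G x ^ q := hG.pow_const q
  have hFyq : Measurable fun y => ∫⁻ x, F (x, y) ^ q ∂μ :=
    Measurable.lintegral_prod_left' (hF.pow_const q)
  have hFy : Measurable fun y => (∫⁻ x, F (x, y) ^ q ∂μ) ^ (1 / q) := hFyq.pow_const _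
  set R := ∫⁻ y, (∫⁻ x, F (x, y) ^ q ∂μ) ^ (1 / q) ∂ν with hR_def
  rw [ge_iff_le]
  set A := ∫⁻ x, G x ^ q ∂μ with hA_def
  set Z : Set X := {x | G x = 0} with hZ_def
  have hZm : MeasurableSet Z := hG (measurableSet_singleton 0)
  rcases eq_or_ne (μ Z) 0 with hZ0 | hZne
  · -- `G > 0` a.e.; truncation argument
    have haeG : ∀ᵐ x ∂μ, G x ≠ 0 := by
      rw [ae_iff]
      simpa using hZ0
    set K : ℕ → Set X := fun n =>
      spanningSets μ n ∩ {x | (n : ℝ≥0∞)⁻¹ ≤ G x ∧ G x ≤ (n : ℝ≥0∞)} with hK_def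
    have hKm : ∀ n, MeasurableSet (K n) := fun n =>
      (measurableSet_spanningSets μ n).inter (hG measurableSet_Icc)
    have hKmono : Monotone K := by
      intro n m hnm
      refine Set.inter_subset_inter (monotone_spanningSets μ hnm) ?_
      rintro x ⟨h1, h2⟩
      exact ⟨le_trans (ENNReal.inv_le_inv.mpr (by exact_mod_cast Nat.cast_le.mpr hnm)) h1,
        le_trans h2 (by exact_mod_cast Nat.cast_le.mpr hnm)⟩
    have hKpos : ∀ n x, x ∈ K n → G x ≠ 0 ∧ G x ≠ ⊤ := by
      rintro n x ⟨-, h1, h2⟩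
      constructor
      · intro h0
        rw [h0, le_zero_iff, ENNReal.inv_eq_zero] at h1
        exact ENNReal.natCast_ne_top n h1
      · exact (lt_of_le_of_lt h2 (ENNReal.natCast_lt_top n)).ne
    set B : ℕ → ℝ≥0∞ := fun n => ∫⁻ x in K n, G x ^ q ∂μ with hB_def
    have hBfin : ∀ n, B n ≠ ⊤ := by
      intro n
      have hbd : ∫⁻ x in K n, G x ^ q ∂μ ≤ ((n : ℝ≥0∞)⁻¹) ^ q * μ (K n) := by
        rw [← setLIntegral_const (K n) _]
        refine setLIntegral_mono' (hKm n) fun x hx => ?_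
        exact rpow_le_rpow_of_nonpos'' hq.le hx.2.1
      refine ne_top_of_le_ne_top ?_ hbd
      refine ENNReal.mul_ne_top ?_ ?_
      · intro htop
        rcases ENNReal.rpow_eq_top_iff.mp htop with ⟨h1, -⟩ | ⟨h1, h2⟩
        · rw [ENNReal.inv_eq_zero] at h1
          exact ENNReal.natCast_ne_top n h1
        · linarith
      · exact (lt_of_le_of_lt (measure_mono Set.inter_subset_left)
          (measure_spanningSets_lt_top μ n)).ne
    -- the union of the `K n` is the set where `0 < G < ⊤`
    have hUnion : (⋃ n, K n) = {x | G x ≠ 0 ∧ G x ≠ ⊤} := by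
      apply Set.Subset.antisymm
      · rintro x hx
        rcases Set.mem_iUnion.mp hx with ⟨n, hn⟩
        exact hKpos n x hn
      · rintro x ⟨h0, hT⟩
        obtain ⟨n1, hn1⟩ : ∃ n, x ∈ spanningSets μ n := by
          have : x ∈ ⋃ n, spanningSets μ n := by rw [iUnion_spanningSets]; trivial
          exact Set.mem_iUnion.mp this
        obtain ⟨n2, hn2⟩ := ENNReal.exists_inv_nat_lt h0
        obtain ⟨n3, hn3⟩ := ENNReal.exists_nat_gt hT
        refine Set.mem_iUnion.mpr ⟨max n1 (max n2 n3), ?_⟩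
        refine ⟨monotone_spanningSets μ (le_max_left _ _) hn1, ?_, ?_⟩
        · refine le_trans (le_trans ?_ hn2.le) le_rfl
          refine ENNReal.inv_le_inv.mpr ?_
          exact_mod_cast Nat.cast_le.mpr (le_trans (le_max_left n2 n3) (le_max_right n1 _))
        · refine le_trans hn3.le ?_
          exact_mod_cast Nat.cast_le.mpr (le_trans (le_max_right n2 n3) (le_max_right n1 _))
    -- `A` is the supremum of the truncated integrals
    have hcompl : ∫⁻ x in (⋃ n, K n)ᶜ, G x ^ q ∂μ = 0 := by
      rw [lintegral_eq_zero_iff hGq]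
      have hmem := ae_restrict_mem (μ := μ) ((MeasurableSet.iUnion hKm).compl)
      filter_upwards [hmem, ae_restrict_of_ae haeG] with x hx hx0
      rw [hUnion] at hx
      simp only [Set.mem_compl_iff, Set.mem_setOf_eq, not_and_or, not_not] at hx
      rcases hx with h | h
      · exact absurd h hx0
      · simp [Pi.zero_apply, h, ENNReal.top_rpow_of_neg hq]
    have hA_eq : A = ∫⁻ x in ⋃ n, K n, G x ^ q ∂μ := by
      rw [hA_def, ← lintegral_add_compl (μ := μ) (fun x => G x ^ q) (MeasurableSet.iUnion hKm),
        hcompl, add_zero]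
    have hsup : ⨆ n, B n = A := by
      rw [hA_eq]
      have hind : ∀ n, B n = ∫⁻ x, (K n).indicator (fun x => G x ^ q) x ∂μ := fun n =>
        (lintegral_indicator (hKm n) _).symm
      simp_rw [hind]
      rw [← lintegral_iSup (fun n => hGq.indicator (hKm n))
        (fun n m hnm x => Set.indicator_le_indicator_of_subset (hKmono hnm) (fun _ => zero_le) x)]
      rw [← lintegral_indicator (MeasurableSet.iUnion hKm)]
      congr 1
      funext x
      by_cases hx : x ∈ ⋃ n, K n
      · rcases Set.mem_iUnion.mp hx with ⟨n, hn⟩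
        rw [Set.indicator_of_mem hx]
        refine le_antisymm (iSup_le fun m => ?_) ?_
        · exact Set.indicator_le_self _ _ x
        · calc G x ^ q = (K n).indicator (fun x => G x ^ q) x := (Set.indicator_of_mem hn fun x => G x ^ q).symm
            _ ≤ ⨆ m, (K m).indicator (fun x => G x ^ q) x := le_iSup (fun m => (K m).indicator (fun x => G x ^ q) x) n
      · rw [Set.indicator_of_notMem hx]
        have : ∀ n, (K n).indicator (fun x => G x ^ q) x = 0 := fun n =>
          Set.indicator_of_notMem (fun hn => hx (Set.mem_iUnion.mpr ⟨n, hn⟩)) _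
        simp [this]
    -- key per-truncation bound
    have hBq : ∀ n, B n ≤ R ^ q := by
      intro n
      rcases eq_or_ne (B n) 0 with h0 | h0
      · rw [h0]; exact zero_le
      set g : X → ℝ≥0∞ := (K n).indicator (fun x => G x ^ (q - 1)) with hg_def
      have hg : Measurable g := (hG.pow_const _).indicator (hKm n)
      have hgr : ∫⁻ x, g x ^ (q / (q - 1)) ∂μ = B n := by
        have hpt : ∀ x, g x ^ (q / (q - 1)) = (K n).indicator (fun x => G x ^ q) x := by
          intro x
          by_cases hx : x ∈ K n
          · rw [hg_def, Set.indicator_of_mem hx, Set.indicator_of_mem hx, ← ENNReal.rpow_mul,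
              show (q - 1) * (q / (q - 1)) = q by field_simp]
          · rw [hg_def, Set.indicator_of_notMem hx, Set.indicator_of_notMem hx,
              ENNReal.zero_rpow_of_pos hr_pos]
        simp_rw [hpt]
        rw [lintegral_indicator (hKm n)]
      have hGg : ∫⁻ x, G x * g x ∂μ = B n := by
        have hpt : ∀ x, G x * g x = (K n).indicator (fun x => G x ^ q) x := by
          intro x
          by_cases hx : x ∈ K n
          · rw [hg_def, Set.indicator_of_mem hx, Set.indicator_of_mem hx]
            obtain ⟨hx0, hxT⟩ := hKpos n x hx
            have hone : G x ^ (1 : ℝ) * G x ^ (q - 1) = G x ^ q := by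
              rw [← ENNReal.rpow_add _ _ hx0 hxT]
              norm_num
            rw [← hone, ENNReal.rpow_one]
          · rw [hg_def, Set.indicator_of_notMem hx, Set.indicator_of_notMem hx, mul_zero]
        simp_rw [hpt]
        rw [lintegral_indicator (hKm n)]
      -- reverse Hölder for each `y`
      have hy : ∀ y, (∫⁻ x, F (x, y) ^ q ∂μ) ^ (1 / q) * (B n) ^ ((q - 1) / q) ≤
          ∫⁻ x, F (x, y) * g x ∂μ := by
        intro y
        have := rev_holder μ hq (fun x => F (x, y)) g
          (hF.comp (measurable_id.prodMk measurable_const)) hg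
        rwa [hgr] at this
      have hint : R * (B n) ^ ((q - 1) / q) ≤ ∫⁻ y, ∫⁻ x, F (x, y) * g x ∂μ ∂ν := by
        rw [hR_def, ← lintegral_mul_const'' _ hFy.aemeasurable]
        exact lintegral_mono hy
      have hswap : ∫⁻ y, ∫⁻ x, F (x, y) * g x ∂μ ∂ν = ∫⁻ x, ∫⁻ y, F (x, y) * g x ∂ν ∂μ := by
        refine (lintegral_lintegral_swap ?_).symm
        exact (hF.mul (hg.comp measurable_fst)).aemeasurable
      have hinner : ∀ x, ∫⁻ y, F (x, y) * g x ∂ν = G x * g x := by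
        intro x
        rw [lintegral_mul_const'' (g x) (f := fun y => F (x, y))
          (hF.comp measurable_prodMk_left).aemeasurable]
      have hfinal : R * (B n) ^ ((q - 1) / q) ≤ B n := by
        calc R * (B n) ^ ((q - 1) / q) ≤ ∫⁻ y, ∫⁻ x, F (x, y) * g x ∂μ ∂ν := hint
          _ = ∫⁻ x, ∫⁻ y, F (x, y) * g x ∂ν ∂μ := hswap
          _ = ∫⁻ x, G x * g x ∂μ := by simp_rw [hinner]
          _ = B n := hGg
      -- conclude `B n ≤ R ^ q`
      have hb0 : (B n) ^ ((q - 1) / q) ≠ 0 := by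
        simp [ENNReal.rpow_eq_zero_iff, h0, hBfin n,
          not_lt.mpr (div_pos_iff.mpr (Or.inr ⟨hq1, hq⟩)).le]
      have hbT : (B n) ^ ((q - 1) / q) ≠ ⊤ := by
        simp [ENNReal.rpow_eq_top_iff, h0, hBfin n,
          not_lt.mpr (div_pos_iff.mpr (Or.inr ⟨hq1, hq⟩)).le]
      have hRle : R ≤ (B n) ^ (1 / q) := by
        have hdiv := (ENNReal.le_div_iff_mul_le (Or.inl hb0) (Or.inl hbT)).mpr hfinal
        have heq : B n / (B n) ^ ((q - 1) / q) = (B n) ^ (1 / q) := by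
          rw [show (1 : ℝ) / q = 1 - (q - 1) / q by field_simp; ring,
            ENNReal.rpow_sub _ _ h0 (hBfin n), ENNReal.rpow_one]
        rwa [heq] at hdiv
      calc B n = ((B n) ^ (1 / q)) ^ q := by
            rw [← ENNReal.rpow_mul, one_div_mul_cancel hq0, ENNReal.rpow_one]
        _ ≤ R ^ q := rpow_le_rpow_of_nonpos'' hq.le hRle
    have hAle : A ≤ R ^ q := by
      rw [← hsup]
      exact iSup_le hBq
    calc R = (R ^ q) ^ (1 / q) := by
          rw [← ENNReal.rpow_mul, mul_one_div_cancel hq0, ENNReal.rpow_one]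
      _ ≤ A ^ (1 / q) := rpow_le_rpow_of_nonpos'' h1q.le hAle
  · -- `G = 0` on a set of positive measure: both sides vanish
    have hAtop : A = ⊤ := by
      have h1 : ∫⁻ x in Z, G x ^ q ∂μ = ⊤ := by
        rw [setLIntegral_congr_fun_ae hZm
          (ae_of_all _ (fun x (hx : G x = 0) => by
            rw [hx, ENNReal.zero_rpow_of_neg hq]) :
            ∀ᵐ x ∂μ, x ∈ Z → G x ^ q = (fun _ => (⊤ : ℝ≥0∞)) x),
          setLIntegral_const, ENNReal.top_mul hZne]
      exact top_le_iff.mp (h1 ▸ setLIntegral_le_lintegral Z _)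
    rw [hAtop, ENNReal.top_rpow_of_neg h1q]
    -- show the right-hand side is zero
    have hZint : ∫⁻ x in Z, G x ∂μ = 0 := by
      rw [setLIntegral_congr_fun_ae hZm (ae_of_all _ fun x (hx : G x = 0) => hx), lintegral_zero]
    have hswap : ∫⁻ y, ∫⁻ x in Z, F (x, y) ∂μ ∂ν = 0 := by
      have hs := lintegral_lintegral_swap (μ := μ.restrict Z) (ν := ν)
        (f := fun x y => F (x, y)) hF.aemeasurable
      rw [← hs]
      exact hZint
    have hae : ∀ᵐ y ∂ν, ∫⁻ x in Z, F (x, y) ∂μ = 0 := by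
      have hm : Measurable fun y => ∫⁻ x in Z, F (x, y) ∂μ :=
        Measurable.lintegral_prod_left' (μ := μ.restrict Z) hF
      exact (lintegral_eq_zero_iff hm).mp hswap
    have hRy : ∀ᵐ y ∂ν, (∫⁻ x, F (x, y) ^ q ∂μ) ^ (1 / q) = 0 := by
      filter_upwards [hae] with y hy
      have h0 : ∀ᵐ x ∂(μ.restrict Z), F (x, y) = 0 :=
        (lintegral_eq_zero_iff (hF.comp (measurable_id.prodMk measurable_const))).mp hy
      have hZq : ∫⁻ x in Z, F (x, y) ^ q ∂μ = ⊤ := by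
        calc ∫⁻ x in Z, F (x, y) ^ q ∂μ = ∫⁻ _ in Z, ⊤ ∂μ :=
              lintegral_congr_ae (h0.mono fun x hx => by
                simp [hx, ENNReal.zero_rpow_of_neg hq])
          _ = ⊤ * μ Z := setLIntegral_const _ _
          _ = ⊤ := ENNReal.top_mul hZne
      have htop : ∫⁻ x, F (x, y) ^ q ∂μ = ⊤ :=
        top_le_iff.mp (hZq ▸ setLIntegral_le_lintegral Z _)
      rw [htop, ENNReal.top_rpow_of_neg h1q]
    have hR0 : R = 0 := by
      calc R = ∫⁻ _, (0 : ℝ≥0∞) ∂ν := lintegral_congr_ae (hRy.mono fun y hy => hy)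
        _ = 0 := lintegral_zero
    exact le_of_eq hR0
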